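/- arXiv:1805.00536 — 5 statements merged into one kernel-verified Lean document; each statement's English description precedes it below -/
import Mathlib

section
/- Let n ≥ 1, let J be a real 2n×2n matrix with J² = -𝟙, and let Ĵ be a real 2n×2n matrix with ĴJ + JĴ = 0 and Ĵ ≠ 0. Set Ĵ' := ĴᵀJ - JĴᵀ, where Ĵᵀ is the transpose of Ĵ. Then Ĵ'J + JĴ' = 0 and ½·tr(Ĵ·J·Ĵ') = tr(ĴᵀĴ) > 0. In particular the alternating form τ_J(Ĵ₁,Ĵ₂) := ½ tr(Ĵ₁ J Ĵ₂) is nondegenerate on the space of matrices anticommuting with J. -/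
open Matrix

/-- For a linear complex structure `J` (`J² = -𝟙`) and a nonzero
matrix `Ĵ` anticommuting with `J`, the matrix `Ĵ' := ĴᵀJ - JĴᵀ` also
anticommutes with `J` and satisfies `½ tr(Ĵ J Ĵ') = tr(ĴᵀĴ) > 0`.  In
particular the form `τ_J` is nondegenerate on the space of matrices
anticommuting with `J`. -/
theorem tau_nondegenerate
    (n : ℕ) (hn : 1 ≤ n)
    (J : Matrix (Fin (2 * n)) (Fin (2 * n)) ℝ) (hJ : J * J = -1)
    (Jhat : Matrix (Fin (2 * n)) (Fin (2 * n)) ℝ)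
    (h : Jhat * J + J * Jhat = 0) (hne : Jhat ≠ 0) :
    (Jhatᵀ * J - J * Jhatᵀ) * J + J * (Jhatᵀ * J - J * Jhatᵀ) = 0 ∧
      (1 / 2 : ℝ) * Matrix.trace (Jhat * J * (Jhatᵀ * J - J * Jhatᵀ)) =
        Matrix.trace (Jhatᵀ * Jhat) ∧
      0 < Matrix.trace (Jhatᵀ * Jhat) := by
  have hanti : Jhat * J = -(J * Jhat) := eq_neg_of_add_eq_zero_left h
  refine ⟨?_, ?_, ?_⟩
  · calc (Jhatᵀ * J - J * Jhatᵀ) * J + J * (Jhatᵀ * J - J * Jhatᵀ)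
        = Jhatᵀ * (J * J) - (J * J) * Jhatᵀ := by noncomm_ring
      _ = 0 := by rw [hJ]; noncomm_ring
  · have e1 : Jhat * J * (Jhatᵀ * J - J * Jhatᵀ)
        = Jhat * J * Jhatᵀ * J - Jhat * (J * J) * Jhatᵀ := by noncomm_ring
    have e2 : Jhat * J * Jhatᵀ * J = -(J * (Jhat * Jhatᵀ) * J) := by
      rw [hanti]; noncomm_ring
    rw [e1, e2, hJ, trace_sub, trace_neg, trace_mul_cycle J (Jhat * Jhatᵀ) J, hJ]
    simp [Matrix.neg_mul, Matrix.mul_neg, trace_mul_comm Jhat Jhatᵀ]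
    ring
  · have : Matrix.trace (Jhatᵀ * Jhat) = ∑ i, ∑ j, Jhat j i * Jhat j i := by
      simp [Matrix.trace, Matrix.diag, Matrix.mul_apply, Matrix.transpose_apply]
    rw [this]
    obtain ⟨a, b, hab⟩ : ∃ a b, Jhat a b ≠ 0 := by
      by_contra hc
      push_neg at hc
      exact hne (by ext a b; simp [hc])
    have := Finset.sum_pos' (s := (Finset.univ : Finset (Fin (2*n))))
      (f := fun i => ∑ j, Jhat j i * Jhat j i)
      (fun i _ => Finset.sum_nonneg fun j _ => mul_self_nonneg _)
      ⟨b, Finset.mem_univ _, Finset.sum_pos'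
        (fun j _ => mul_self_nonneg _)
        ⟨a, Finset.mem_univ _, mul_self_pos.mpr hab⟩⟩
    exact this
end

section
/- Let n ≥ 1 and let J₀ denote the real 2n×2n block matrix ((0, -𝟙ₙ),(𝟙ₙ, 0)). Let (g_k) be a sequence in SL(2n,ℝ) such that the sequence of matrices g_k J₀ g_k⁻¹ converges to J₀. Then there exists a sequence (h_k) of matrices in SL(2n,ℝ) with h_k J₀ = J₀ h_k for all k such that g_k h_k converges to the identity matrix. -/
open Matrix

/-- The standard linear complex structure `J₀ = ((0, -𝟙ₙ),(𝟙ₙ, 0))` on `ℝ^{2n}`,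
with `ℝ^{2n}` indexed by `Fin n ⊕ Fin n`. -/
noncomputable def J0 (n : ℕ) : Matrix (Fin n ⊕ Fin n) (Fin n ⊕ Fin n) ℝ :=
  Matrix.fromBlocks 0 (-1) 1 0

lemma J0_sq (n : ℕ) : J0 n * J0 n = -1 := by
  rw [show (-1 : Matrix (Fin n ⊕ Fin n) (Fin n ⊕ Fin n) ℝ)
      = -(Matrix.fromBlocks 1 0 0 1) by rw [Matrix.fromBlocks_one],
    Matrix.fromBlocks_neg]
  simp [J0, Matrix.fromBlocks_multiply]

/-- The "averaging" matrix `½(1 - J₀A)`, which intertwines `A` and `J₀` when `A² = -1`. -/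
noncomputable def Qm (n : ℕ) (A : Matrix (Fin n ⊕ Fin n) (Fin n ⊕ Fin n) ℝ) :
    Matrix (Fin n ⊕ Fin n) (Fin n ⊕ Fin n) ℝ :=
  (2:ℝ)⁻¹ • (1 - J0 n * A)

lemma Qm_J0 (n : ℕ) : Qm n (J0 n) = 1 := by
  rw [Qm, J0_sq, sub_neg_eq_add,
    ← two_smul ℝ (1 : Matrix (Fin n ⊕ Fin n) (Fin n ⊕ Fin n) ℝ), smul_smul]
  norm_num

lemma Qm_comm (n : ℕ) (A : Matrix (Fin n ⊕ Fin n) (Fin n ⊕ Fin n) ℝ)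
    (hA : A * A = -1) : Qm n A * A = J0 n * Qm n A := by
  rw [Qm, smul_mul_assoc, mul_smul_comm, sub_mul, one_mul, mul_assoc, hA, mul_neg_one,
    sub_neg_eq_add, mul_sub, mul_one, ← mul_assoc, J0_sq, neg_one_mul, sub_neg_eq_add,
    add_comm]

lemma inv_comm_of_comm {m : Type*} [Fintype m] [DecidableEq m]
    (J P : Matrix m m ℝ) (hP : P * J = J * P) (hu : IsUnit P.det) :
    P⁻¹ * J = J * P⁻¹ := by
  calc P⁻¹ * J = P⁻¹ * J * (P * P⁻¹) := by rw [Matrix.mul_nonsing_inv _ hu, mul_one]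
    _ = P⁻¹ * (J * P) * P⁻¹ := by simp only [mul_assoc]
    _ = P⁻¹ * (P * J) * P⁻¹ := by rw [hP]
    _ = (P⁻¹ * P) * (J * P⁻¹) := by simp only [mul_assoc]
    _ = J * P⁻¹ := by rw [Matrix.nonsing_inv_mul _ hu, one_mul]

set_option maxHeartbeats 1000000 in
/-- Properness of the map `SL(2n,ℝ)/H → ℝ^{2n×2n}`, `g ↦ gJ₀g⁻¹`:
if `g_k ∈ SL(2n,ℝ)` and `g_k J₀ g_k⁻¹ → J₀`, then there exist `h_k ∈ SL(2n,ℝ)`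
commuting with `J₀` such that `g_k h_k → 𝟙`. -/
theorem sl_orbit_proper (n : ℕ) (hn : 1 ≤ n)
    (g : ℕ → Matrix (Fin n ⊕ Fin n) (Fin n ⊕ Fin n) ℝ)
    (hdet : ∀ k, (g k).det = 1)
    (hconv : Filter.Tendsto (fun k => g k * J0 n * (g k)⁻¹)
      Filter.atTop (nhds (J0 n))) :
    ∃ h : ℕ → Matrix (Fin n ⊕ Fin n) (Fin n ⊕ Fin n) ℝ,
      (∀ k, (h k).det = 1 ∧ h k * J0 n = J0 n * h k) ∧
        Filter.Tendsto (fun k => g k * h k) Filter.atTop (nhds 1) := by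
  classical
  have hgu : ∀ k, IsUnit (g k).det := fun k => by rw [hdet k]; exact isUnit_one
  have hgg : ∀ k, g k * (g k)⁻¹ = 1 := fun k => Matrix.mul_nonsing_inv _ (hgu k)
  have hgg' : ∀ k, (g k)⁻¹ * g k = 1 := fun k => Matrix.nonsing_inv_mul _ (hgu k)
  have hgJ : ∀ k, (g k * J0 n * (g k)⁻¹) * g k = g k * J0 n := by
    intro k
    rw [mul_assoc (g k * J0 n), hgg' k, mul_one]
  have hA2 : ∀ k, (g k * J0 n * (g k)⁻¹) * (g k * J0 n * (g k)⁻¹) = -1 := by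
    intro k
    calc (g k * J0 n * (g k)⁻¹) * (g k * J0 n * (g k)⁻¹)
        = g k * (J0 n * (((g k)⁻¹ * g k) * (J0 n * (g k)⁻¹))) := by simp only [mul_assoc]
      _ = g k * (J0 n * (J0 n * (g k)⁻¹)) := by rw [hgg' k, one_mul]
      _ = g k * ((J0 n * J0 n) * (g k)⁻¹) := by simp only [mul_assoc]
      _ = -(g k * (g k)⁻¹) := by rw [J0_sq]; simp
      _ = -1 := by rw [hgg k]
  -- `Q k` intertwines and converges to `1`
  have hPJ : ∀ k, (Qm n (g k * J0 n * (g k)⁻¹) * g k) * J0 n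
      = J0 n * (Qm n (g k * J0 n * (g k)⁻¹) * g k) := by
    intro k
    calc (Qm n (g k * J0 n * (g k)⁻¹) * g k) * J0 n
        = Qm n (g k * J0 n * (g k)⁻¹) * (g k * J0 n) := mul_assoc _ _ _
      _ = Qm n (g k * J0 n * (g k)⁻¹) * ((g k * J0 n * (g k)⁻¹) * g k) := by rw [hgJ k]
      _ = (Qm n (g k * J0 n * (g k)⁻¹) * (g k * J0 n * (g k)⁻¹)) * g k :=
          (mul_assoc _ _ _).symm
      _ = (J0 n * Qm n (g k * J0 n * (g k)⁻¹)) * g k := by rw [Qm_comm n _ (hA2 k)]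
      _ = J0 n * (Qm n (g k * J0 n * (g k)⁻¹) * g k) := mul_assoc _ _ _
  have hQ1 : Filter.Tendsto (fun k => Qm n (g k * J0 n * (g k)⁻¹)) Filter.atTop
      (nhds (1 : Matrix (Fin n ⊕ Fin n) (Fin n ⊕ Fin n) ℝ)) := by
    have h1 : Filter.Tendsto (fun k => Qm n (g k * J0 n * (g k)⁻¹)) Filter.atTop
        (nhds (Qm n (J0 n))) := by
      simp only [Qm]
      exact (tendsto_const_nhds.sub (hconv.const_mul (J0 n))).const_smul _
    rwa [Qm_J0] at h1
  have hQdet1 : Filter.Tendsto (fun k => (Qm n (g k * J0 n * (g k)⁻¹)).det)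
      Filter.atTop (nhds 1) := by
    have hc : Continuous fun A : Matrix (Fin n ⊕ Fin n) (Fin n ⊕ Fin n) ℝ => A.det :=
      Continuous.matrix_det continuous_id
    have h := (hc.tendsto (1 : Matrix (Fin n ⊕ Fin n) (Fin n ⊕ Fin n) ℝ)).comp hQ1
    rwa [Matrix.det_one] at h
  have hev : ∀ᶠ k in Filter.atTop, 0 < (Qm n (g k * J0 n * (g k)⁻¹)).det :=
    hQdet1.eventually (eventually_gt_nhds zero_lt_one)
  have hc1 : Filter.Tendsto
      (fun k => ((Qm n (g k * J0 n * (g k)⁻¹)).det) ^ ((2 * (n:ℝ))⁻¹))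
      Filter.atTop (nhds 1) := by
    have hco : ContinuousAt (fun x : ℝ => x ^ ((2 * (n:ℝ))⁻¹)) 1 :=
      Real.continuousAt_rpow_const 1 _ (Or.inl one_ne_zero)
    have h := hco.tendsto.comp hQdet1
    rwa [Real.one_rpow] at h
  refine ⟨fun k => if hd : 0 < (Qm n (g k * J0 n * (g k)⁻¹)).det then
      (((Qm n (g k * J0 n * (g k)⁻¹)).det) ^ ((2 * (n:ℝ))⁻¹)) •
        (Qm n (g k * J0 n * (g k)⁻¹) * g k)⁻¹ else 1, ?_, ?_⟩
  · intro k
    by_cases hd : 0 < (Qm n (g k * J0 n * (g k)⁻¹)).det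
    · simp only [dif_pos hd]
      have hPdet : (Qm n (g k * J0 n * (g k)⁻¹) * g k).det
          = (Qm n (g k * J0 n * (g k)⁻¹)).det := by rw [det_mul, hdet k, mul_one]
      have hPu : IsUnit (Qm n (g k * J0 n * (g k)⁻¹) * g k).det := by
        rw [hPdet]; exact (isUnit_iff_ne_zero).2 hd.ne'
      constructor
      · rw [Matrix.det_smul, Matrix.det_nonsing_inv, hPdet]
        have hcard : Fintype.card (Fin n ⊕ Fin n) = n + n := by
          simp [Fintype.card_sum]
        rw [hcard]
        have hpow : ((((Qm n (g k * J0 n * (g k)⁻¹)).det) ^ ((2 * (n:ℝ))⁻¹)) ^ (n + n) : ℝ)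
            = (Qm n (g k * J0 n * (g k)⁻¹)).det := by
          rw [← Real.rpow_natCast ((((Qm n (g k * J0 n * (g k)⁻¹)).det) ^ ((2 * (n:ℝ))⁻¹)))
            (n + n), ← Real.rpow_mul hd.le]
          have hne : (n:ℝ) ≠ 0 := by
            exact_mod_cast (Nat.one_le_iff_ne_zero.mp hn)
          have he : ((2 * (n:ℝ))⁻¹ * ((n + n : ℕ) : ℝ) : ℝ) = 1 := by
            push_cast
            field_simp
            ring
          rw [he, Real.rpow_one]
        rw [hpow, Ring.inverse_eq_inv, mul_inv_cancel₀ hd.ne']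
      · have hinv := inv_comm_of_comm (J0 n) _ (hPJ k) hPu
        rw [smul_mul_assoc, hinv, mul_smul_comm]
    · simp only [dif_neg hd]
      exact ⟨Matrix.det_one, by rw [one_mul, mul_one]⟩
  · have hQinv : Filter.Tendsto (fun k => (Qm n (g k * J0 n * (g k)⁻¹))⁻¹) Filter.atTop
        (nhds (1 : Matrix (Fin n ⊕ Fin n) (Fin n ⊕ Fin n) ℝ)) := by
      have hco : ContinuousAt Inv.inv (1 : Matrix (Fin n ⊕ Fin n) (Fin n ⊕ Fin n) ℝ) := by
        apply continuousAt_matrix_inv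
        rw [Matrix.det_one]
        have h1 : ContinuousAt (Inv.inv : ℝ → ℝ) 1 := continuousAt_inv₀ one_ne_zero
        simp only [Ring.inverse_eq_inv']
        exact h1
      have h := hco.tendsto.comp hQ1
      rwa [show (1 : Matrix (Fin n ⊕ Fin n) (Fin n ⊕ Fin n) ℝ)⁻¹ = 1 from
        Matrix.inv_eq_left_inv (one_mul 1)] at h
    have hlim := hc1.smul hQinv
    rw [one_smul] at hlim
    refine hlim.congr' ?_
    filter_upwards [hev] with k hd
    simp only [dif_pos hd]
    rw [Matrix.mul_inv_rev, mul_smul_comm, ← mul_assoc, hgg k, one_mul]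
end

section
/- Let n ≥ 1, let J be a real 2n×2n matrix with J² = -𝟙 that is compatible with ω₀ (i.e. ω₀(Ju,Jv) = ω₀(u,v) for all u,v and ω₀(u,Ju) > 0 for all u ≠ 0), and let Ĵ be a nonzero real 2n×2n matrix with ĴJ + JĴ = 0 and ω₀(Ĵu,v) + ω₀(u,Ĵv) = 0 for all u,v ∈ ℝ^{2n}. Then tr(Ĵ²) > 0. Hence the symmetric bilinear form (Ĵ₁,Ĵ₂) ↦ ½ tr(Ĵ₁Ĵ₂) is positive definite on the space of infinitesimal ω₀-compatible complex structures at J. -/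
open Matrix

/-- The standard symplectic form `ω₀(u,v) = ⟨J₀u, v⟩` on `ℝ^{2n}`. -/
noncomputable def omega0 (n : ℕ) (u v : Fin n ⊕ Fin n → ℝ) : ℝ :=
  dotProduct ((J0 n).mulVec u) v

section aux

variable {ι : Type*} [Fintype ι]

lemma mulVec_dot_aux (M : Matrix ι ι ℝ) (u v : ι → ℝ) :
    M.mulVec u ⬝ᵥ v = u ⬝ᵥ Mᵀ.mulVec v := by
  rw [Matrix.dotProduct_mulVec, Matrix.vecMul_transpose]

lemma ext_of_dot_aux [DecidableEq ι] (M N : Matrix ι ι ℝ)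
    (h : ∀ u v, u ⬝ᵥ M.mulVec v = u ⬝ᵥ N.mulVec v) : M = N := by
  ext i j
  have := h (Pi.single i 1) (Pi.single j 1)
  simpa [Matrix.mulVec_single, single_dotProduct, dotProduct_single] using this

lemma trace_transpose_mul_self_pos (M : Matrix ι ι ℝ) (hM : M ≠ 0) :
    0 < Matrix.trace (Mᵀ * M) := by
  have h : Matrix.trace (Mᵀ * M) = ∑ j, ∑ i, (M i j) ^ 2 := by
    simp [Matrix.trace, Matrix.diag, Matrix.mul_apply, sq]
  rw [h]
  obtain ⟨i, j, hij⟩ : ∃ i j, M i j ≠ 0 := by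
    by_contra hc
    push_neg at hc
    exact hM (by ext i j; simp [hc])
  have hle : ∀ j ∈ Finset.univ, (0:ℝ) ≤ ∑ i, (M i j) ^ 2 := fun j _ =>
    Finset.sum_nonneg fun i _ => sq_nonneg _
  refine Finset.sum_pos' hle ⟨j, Finset.mem_univ j, ?_⟩
  exact Finset.sum_pos' (fun i _ => sq_nonneg _)
    ⟨i, Finset.mem_univ i, by positivity⟩

end aux

/-- For a linear complex structure `J` compatible with `ω₀` and a
nonzero matrix `Ĵ` with `ĴJ + JĴ = 0` and `ω₀(Ĵu,v) + ω₀(u,Ĵv) = 0` for all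
`u,v`, one has `tr(Ĵ²) > 0`; hence `(Ĵ₁,Ĵ₂) ↦ ½ tr(Ĵ₁Ĵ₂)` is positive definite
on the space of infinitesimal `ω₀`-compatible complex structures at `J`. -/
theorem trace_sq_pos_of_compatible
    (n : ℕ) (hn : 1 ≤ n)
    (J : Matrix (Fin n ⊕ Fin n) (Fin n ⊕ Fin n) ℝ) (hJ : J * J = -1)
    (hω : ∀ u v, omega0 n (J.mulVec u) (J.mulVec v) = omega0 n u v)
    (hpos : ∀ u, u ≠ 0 → 0 < omega0 n u (J.mulVec u))
    (Jhat : Matrix (Fin n ⊕ Fin n) (Fin n ⊕ Fin n) ℝ) (hne : Jhat ≠ 0)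
    (hanti : Jhat * J + J * Jhat = 0)
    (hskew : ∀ u v, omega0 n (Jhat.mulVec u) v + omega0 n u (Jhat.mulVec v) = 0) :
    0 < Matrix.trace (Jhat * Jhat) := by
  classical
  set A : Matrix (Fin n ⊕ Fin n) (Fin n ⊕ Fin n) ℝ := (J0 n)ᵀ * J with hA
  -- a general rewriting of omega0 applied to matrix actions
  have key : ∀ (M N : Matrix (Fin n ⊕ Fin n) (Fin n ⊕ Fin n) ℝ) (u v : Fin n ⊕ Fin n → ℝ),
      omega0 n (M.mulVec u) (N.mulVec v) = u ⬝ᵥ (Mᵀ * (J0 n)ᵀ * N).mulVec v := by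
    intro M N u v
    unfold omega0
    rw [Matrix.mulVec_mulVec, mulVec_dot_aux, Matrix.mulVec_mulVec, Matrix.transpose_mul,
      Matrix.mul_assoc]
  have key1 : ∀ u v : Fin n ⊕ Fin n → ℝ, omega0 n u v = u ⬝ᵥ ((J0 n)ᵀ).mulVec v := by
    intro u v
    unfold omega0
    rw [mulVec_dot_aux]
  -- matrix form of the compatibility hypothesis
  have hωmat : Jᵀ * (J0 n)ᵀ * J = (J0 n)ᵀ := by
    apply ext_of_dot_aux
    intro u v
    rw [← key J J u v, hω u v, key1]
  -- matrix form of the skew hypothesis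
  have hskewmat : Jhatᵀ * (J0 n)ᵀ = -((J0 n)ᵀ * Jhat) := by
    rw [eq_neg_iff_add_eq_zero]
    apply ext_of_dot_aux _ 0
    intro u v
    have h := hskew u v
    rw [Matrix.zero_mulVec, dotProduct_zero, Matrix.add_mulVec, dotProduct_add]
    have e1 : u ⬝ᵥ (Jhatᵀ * (J0 n)ᵀ).mulVec v = omega0 n (Jhat.mulVec u) v := by
      have := key Jhat 1 u v
      simpa using this.symm
    have e2 : u ⬝ᵥ ((J0 n)ᵀ * Jhat).mulVec v = omega0 n u (Jhat.mulVec v) := by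
      have := key 1 Jhat u v
      simpa using this.symm
    rw [e1, e2, h]
  have hJJhat : Jhat * J = -(J * Jhat) := eq_neg_of_add_eq_zero_left hanti
  -- A is symmetric
  have hAsymm : Aᵀ = A := by
    have hJinv : J * (-J) = 1 := by rw [Matrix.mul_neg, hJ]; simp
    have h1 : Jᵀ * (J0 n)ᵀ = (J0 n)ᵀ * (-J) :=
      calc Jᵀ * (J0 n)ᵀ = Jᵀ * (J0 n)ᵀ * (J * (-J)) := by rw [hJinv, Matrix.mul_one]
        _ = (Jᵀ * (J0 n)ᵀ * J) * (-J) := by rw [Matrix.mul_assoc (Jᵀ * (J0 n)ᵀ) J (-J)]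
        _ = (J0 n)ᵀ * (-J) := by rw [hωmat]
    have hJ0T : ((J0 n)ᵀ)ᵀ = -(J0 n)ᵀ := by
      rw [Matrix.transpose_transpose]
      show J0 n = -(J0 n)ᵀ
      unfold J0
      rw [Matrix.fromBlocks_transpose]
      ext (i | i) (j | j) <;> simp [Matrix.fromBlocks]
    calc Aᵀ = Jᵀ * ((J0 n)ᵀ)ᵀ := by rw [hA, Matrix.transpose_mul]
      _ = Jᵀ * (-(J0 n)ᵀ) := by rw [hJ0T]
      _ = -(Jᵀ * (J0 n)ᵀ) := by rw [Matrix.mul_neg]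
      _ = -((J0 n)ᵀ * (-J)) := by rw [h1]
      _ = (J0 n)ᵀ * J := by rw [Matrix.mul_neg, neg_neg]
  -- A is positive definite
  have hApos : A.PosDef := by
    refine posDef_iff_dotProduct_mulVec.mpr ⟨?_, ?_⟩
    · show Aᴴ = A
      have : Aᴴ = Aᵀ := by ext i j; simp [Matrix.conjTranspose_apply]
      rw [this, hAsymm]
    · intro x hx
      have h := hpos x hx
      have e : omega0 n x (J.mulVec x) = x ⬝ᵥ A.mulVec x := by
        have := key 1 J x x
        simpa [hA] using this
      rw [e] at h
      simpa using h
  -- S := A * Jhat is symmetric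
  obtain ⟨S, hSdef⟩ : ∃ S, S = A * Jhat := ⟨A * Jhat, rfl⟩
  have hSsymm : Sᵀ = S := by
    calc Sᵀ = Jhatᵀ * Aᵀ := by rw [hSdef, Matrix.transpose_mul]
      _ = Jhatᵀ * ((J0 n)ᵀ * J) := by rw [hAsymm, hA]
      _ = (Jhatᵀ * (J0 n)ᵀ) * J := by rw [Matrix.mul_assoc]
      _ = -((J0 n)ᵀ * Jhat) * J := by rw [hskewmat]
      _ = -((J0 n)ᵀ * (Jhat * J)) := by rw [Matrix.neg_mul, Matrix.mul_assoc]
      _ = -((J0 n)ᵀ * (-(J * Jhat))) := by rw [hJJhat]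
      _ = (J0 n)ᵀ * (J * Jhat) := by rw [Matrix.mul_neg, neg_neg]
      _ = S := by rw [hSdef, hA, Matrix.mul_assoc]
  -- B := square root of A⁻¹, made opaque
  have hAinv : (A⁻¹).PosDef := hApos.inv
  obtain ⟨B, hBsymm, hB2⟩ :
      ∃ B : Matrix (Fin n ⊕ Fin n) (Fin n ⊕ Fin n) ℝ, Bᵀ = B ∧ B * B = A⁻¹ := by
    open scoped MatrixOrder in
    obtain ⟨X, hX, -, hXX⟩ := CFC.exists_sqrt_of_isSelfAdjoint_of_quasispectrumRestricts
      hAinv.posSemidef.isHermitian (QuasispectrumRestricts.nnreal_of_nonneg hAinv.posSemidef.nonneg)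
    refine ⟨X, ?_, hXX⟩
    have h : Xᴴ = X := hX
    have e : Xᴴ = Xᵀ := by
      ext i j; simp [Matrix.conjTranspose_apply]
    rw [← e]; exact h
  -- B is invertible
  have hdetAinv : (A⁻¹).det ≠ 0 := hAinv.det_pos.ne'
  have hBdet : IsUnit B.det := by
    rw [isUnit_iff_ne_zero]
    intro h0
    apply hdetAinv
    rw [← hB2, Matrix.det_mul, h0, mul_zero]
  have hAdet : IsUnit A.det := hApos.det_pos.ne'.isUnit
  -- Jhat = A⁻¹ * S
  have hJhatS : Jhat = A⁻¹ * S := by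
    rw [hSdef, ← Matrix.mul_assoc, Matrix.nonsing_inv_mul A hAdet, Matrix.one_mul]
  obtain ⟨M, hMdef⟩ : ∃ M, M = B * S * B := ⟨B * S * B, rfl⟩
  have hMsymm : Mᵀ = M := by
    rw [hMdef, Matrix.transpose_mul, Matrix.transpose_mul, hBsymm, hSsymm, Matrix.mul_assoc]
  -- trace identity
  have htr : Matrix.trace (Jhat * Jhat) = Matrix.trace (M * M) := by
    have e1 : Jhat * Jhat = B * (B * (S * (B * (B * S)))) := by
      rw [hJhatS, ← hB2]
      simp only [Matrix.mul_assoc]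
    rw [e1, Matrix.trace_mul_comm]
    congr 1
    rw [hMdef]
    simp only [Matrix.mul_assoc]
  -- M ≠ 0
  have hMne : M ≠ 0 := by
    intro hM0
    have hS0 : S = 0 := by
      calc S = (B⁻¹ * B) * S * (B * B⁻¹) := by
            rw [Matrix.nonsing_inv_mul B hBdet, Matrix.mul_nonsing_inv B hBdet,
              Matrix.one_mul, Matrix.mul_one]
        _ = B⁻¹ * M * B⁻¹ := by rw [hMdef]; simp only [Matrix.mul_assoc]
        _ = 0 := by rw [hM0, Matrix.mul_zero, Matrix.zero_mul]
    apply hne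
    rw [hJhatS, hS0, Matrix.mul_zero]
  rw [htr]
  calc (0:ℝ) < Matrix.trace (Mᵀ * M) := trace_transpose_mul_self_pos M hMne
    _ = Matrix.trace (M * M) := by rw [hMsymm]
end

section
/- Let n ≥ 2 and let J₀ denote the real 2n×2n block matrix ((0, -𝟙ₙ),(𝟙ₙ, 0)). Then the symmetric bilinear form (Ĵ₁,Ĵ₂) ↦ ½ tr(Ĵ₁Ĵ₂) on the space {Ĵ ∈ ℝ^{2n×2n} : ĴJ₀ + J₀Ĵ = 0} is indefinite: there exist matrices Ĵ₊ and Ĵ₋, each anticommuting with J₀, such that tr(Ĵ₊²) > 0 and tr(Ĵ₋²) < 0. -/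
open Matrix

lemma trace_fromBlocks_aux {n : ℕ} (A B C D : Matrix (Fin n) (Fin n) ℝ) :
    Matrix.trace (Matrix.fromBlocks A B C D) = Matrix.trace A + Matrix.trace D := by
  simp [Matrix.trace, Fintype.sum_sum_type, Matrix.fromBlocks, Matrix.diag]

/-- For `n ≥ 2`, the symmetric bilinear form
`(Ĵ₁,Ĵ₂) ↦ ½ tr(Ĵ₁Ĵ₂)` on the space of matrices anticommuting with `J₀` is
indefinite: there are matrices `Ĵ₊, Ĵ₋` anticommuting with `J₀` with
`tr(Ĵ₊²) > 0` and `tr(Ĵ₋²) < 0`. -/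
theorem trace_pairing_indefinite (n : ℕ) (hn : 2 ≤ n) :
    ∃ Jp Jm : Matrix (Fin n ⊕ Fin n) (Fin n ⊕ Fin n) ℝ,
      Jp * J0 n + J0 n * Jp = 0 ∧
      Jm * J0 n + J0 n * Jm = 0 ∧
      0 < Matrix.trace (Jp * Jp) ∧
      Matrix.trace (Jm * Jm) < 0 := by
  have h0 : (0 : ℕ) < n := by omega
  have h1 : (1 : ℕ) < n := by omega
  set i0 : Fin n := ⟨0, h0⟩
  set i1 : Fin n := ⟨1, h1⟩
  have hne : i0 ≠ i1 := by simp [i0, i1, Fin.ext_iff]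
  set B : Matrix (Fin n) (Fin n) ℝ :=
    Matrix.single i0 i1 1 - Matrix.single i1 i0 1 with hB
  have hBB : Matrix.trace (B * B) = -2 := by
    have : B * B = -(Matrix.single i0 i0 1) - Matrix.single i1 i1 1 := by
      simp [hB, sub_mul, mul_sub, Matrix.single_mul_single_same,
        Matrix.single_mul_single_of_ne (1:ℝ) i0 i1 i0 hne.symm,
        Matrix.single_mul_single_of_ne (1:ℝ) i1 i0 i1 hne]
      abel
    rw [this]
    simp [Matrix.trace_sub, Matrix.trace_single_eq_same]
    norm_num
  refine ⟨Matrix.fromBlocks 1 0 0 (-1), Matrix.fromBlocks 0 B B 0, ?_, ?_, ?_, ?_⟩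
  · simp [J0, Matrix.fromBlocks_multiply, Matrix.fromBlocks_add]
  · simp [J0, Matrix.fromBlocks_multiply, Matrix.fromBlocks_add]
  · rw [Matrix.fromBlocks_multiply, trace_fromBlocks_aux]
    have : (0:ℝ) < n := by exact_mod_cast h0
    simp [Matrix.trace_one]
    positivity
  · rw [Matrix.fromBlocks_multiply, trace_fromBlocks_aux]
    simp only [mul_zero, zero_mul, add_zero, zero_add, hBB]
    norm_num
end

section
/- Let n ≥ 1. Then the map Z ↦ J(Z) is a bijection from the Siegel upper half space 𝒮ₙ (complex symmetric n×n matrices Z = X + iY with Y positive definite) onto the set of ω₀-compatible linear complex structures {J ∈ ℝ^{2n×2n} : J² = -𝟙, ω₀(Ju,Jv) = ω₀(u,v) for all u,v ∈ ℝ^{2n}, and ω₀(u,Ju) > 0 for all u ≠ 0}. -/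
open Matrix

/-- The linear complex structure `J(Z)` associated to a point `Z = X + iY` of
the Siegel upper half space: the block matrix
`((XY⁻¹, -Y - XY⁻¹X),(Y⁻¹, -Y⁻¹X))`. -/
noncomputable def Jsiegel (n : ℕ) (X Y : Matrix (Fin n) (Fin n) ℝ) :
    Matrix (Fin n ⊕ Fin n) (Fin n ⊕ Fin n) ℝ :=
  Matrix.fromBlocks (X * Y⁻¹) (-Y - X * Y⁻¹ * X) Y⁻¹ (-(Y⁻¹ * X))

/-- The Siegel upper half space, described by the pairs `(X,Y)` of real
symmetric `n×n` matrices with `Y` positive definite representing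
`Z = X + iY`. -/
def siegelSpace (n : ℕ) :
    Set (Matrix (Fin n) (Fin n) ℝ × Matrix (Fin n) (Fin n) ℝ) :=
  {p | p.1ᵀ = p.1 ∧ p.2ᵀ = p.2 ∧ p.2.PosDef}

/-- The set of `ω₀`-compatible linear complex structures on `ℝ^{2n}`. -/
def compatibleJ (n : ℕ) : Set (Matrix (Fin n ⊕ Fin n) (Fin n ⊕ Fin n) ℝ) :=
  {J | J * J = -1 ∧
    (∀ u v, omega0 n (J.mulVec u) (J.mulVec v) = omega0 n u v) ∧
    (∀ u, u ≠ 0 → 0 < omega0 n u (J.mulVec u))}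

-- ===== helpers =====
lemma mulVec_dot {m : Type*} [Fintype m] (A : Matrix m m ℝ) (u w : m → ℝ) :
    (A *ᵥ u) ⬝ᵥ w = u ⬝ᵥ (Aᵀ *ᵥ w) := by
  rw [dotProduct_mulVec, vecMul_transpose]

lemma mat_ext_of_dot {m : Type*} [Fintype m] [DecidableEq m] {M N : Matrix m m ℝ}
    (h : ∀ u v : m → ℝ, u ⬝ᵥ (M *ᵥ v) = u ⬝ᵥ (N *ᵥ v)) : M = N := by
  ext i j
  have := h (Pi.single i 1) (Pi.single j 1)
  simpa [mulVec_single, single_dotProduct] using this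

lemma J0_transpose (n : ℕ) : (J0 n)ᵀ = -(J0 n) := by
  rw [J0, fromBlocks_transpose, fromBlocks_neg]
  simp

lemma omega0_eq (n : ℕ) (u v : Fin n ⊕ Fin n → ℝ) :
    omega0 n u v = u ⬝ᵥ ((-(J0 n)) *ᵥ v) := by
  rw [omega0, mulVec_dot, J0_transpose]

lemma omega0_mulVec (n : ℕ) (M : Matrix (Fin n ⊕ Fin n) (Fin n ⊕ Fin n) ℝ)
    (u v : Fin n ⊕ Fin n → ℝ) :
    omega0 n u (M *ᵥ v) = u ⬝ᵥ ((-(J0 n * M)) *ᵥ v) := by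
  rw [omega0_eq, mulVec_mulVec, Matrix.neg_mul]

lemma omega0_mulVec_mulVec (n : ℕ) (M N : Matrix (Fin n ⊕ Fin n) (Fin n ⊕ Fin n) ℝ)
    (u v : Fin n ⊕ Fin n → ℝ) :
    omega0 n (M *ᵥ u) (N *ᵥ v) = u ⬝ᵥ (((J0 n * M)ᵀ * N) *ᵥ v) := by
  rw [omega0, mulVec_mulVec, mulVec_dot, mulVec_mulVec]

-- J0 * Jsiegel computation
lemma J0_mul_Jsiegel (n : ℕ) (X Y : Matrix (Fin n) (Fin n) ℝ) :
    J0 n * Jsiegel n X Y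
      = fromBlocks (-Y⁻¹) (Y⁻¹ * X) (X * Y⁻¹) (-Y - X * Y⁻¹ * X) := by
  rw [J0, Jsiegel, fromBlocks_multiply]
  congr 1 <;> simp

-- symmetry of J0 * Jsiegel
lemma J0_mul_Jsiegel_symm (n : ℕ) {X Y : Matrix (Fin n) (Fin n) ℝ}
    (hX : Xᵀ = X) (hY : Yᵀ = Y) :
    (J0 n * Jsiegel n X Y)ᵀ = J0 n * Jsiegel n X Y := by
  rw [J0_mul_Jsiegel, fromBlocks_transpose]
  congr 1 <;> simp [transpose_nonsing_inv, hX, hY, Matrix.mul_assoc]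

-- J² = -1
lemma Jsiegel_sq (n : ℕ) {X Y : Matrix (Fin n) (Fin n) ℝ} (hY : IsUnit Y.det) :
    Jsiegel n X Y * Jsiegel n X Y = -1 := by
  have h1 : Y * Y⁻¹ = 1 := mul_nonsing_inv Y hY
  have h2 : Y⁻¹ * Y = 1 := nonsing_inv_mul Y hY
  have h1' : ∀ M : Matrix (Fin n) (Fin n) ℝ, Y * (Y⁻¹ * M) = M := fun M => by
    rw [← Matrix.mul_assoc, h1, Matrix.one_mul]
  have h2' : ∀ M : Matrix (Fin n) (Fin n) ℝ, Y⁻¹ * (Y * M) = M := fun M => by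
    rw [← Matrix.mul_assoc, h2, Matrix.one_mul]
  rw [Jsiegel, fromBlocks_multiply, show (-1 : Matrix (Fin n ⊕ Fin n) (Fin n ⊕ Fin n) ℝ)
      = fromBlocks (-1) 0 0 (-1) by rw [← fromBlocks_one, fromBlocks_neg]; simp]
  refine fromBlocks_inj.mpr ⟨?_, ?_, ?_, ?_⟩ <;>
  · simp only [Matrix.mul_sub, Matrix.sub_mul, Matrix.mul_neg, Matrix.neg_mul,
      Matrix.mul_assoc, h1', h2', h1, h2, Matrix.mul_one, Matrix.one_mul, neg_neg]
    abel

-- factorization of -(J0 * Jsiegel)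
lemma S_factor (n : ℕ) {X Y : Matrix (Fin n) (Fin n) ℝ} (hX : Xᵀ = X) :
    (fromBlocks 1 (-X) 0 1 : Matrix (Fin n ⊕ Fin n) (Fin n ⊕ Fin n) ℝ)ᵀ *
      (fromBlocks Y⁻¹ 0 0 Y * fromBlocks 1 (-X) 0 1)
      = -(J0 n * Jsiegel n X Y) := by
  rw [J0_mul_Jsiegel, fromBlocks_transpose, fromBlocks_multiply, fromBlocks_multiply,
    fromBlocks_neg]
  refine fromBlocks_inj.mpr ⟨?_, ?_, ?_, ?_⟩ <;>
  simp only [Matrix.mul_sub, Matrix.sub_mul, Matrix.mul_neg, Matrix.neg_mul,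
      Matrix.mul_assoc, Matrix.mul_one, Matrix.one_mul, Matrix.mul_zero, Matrix.zero_mul,
      transpose_neg, transpose_one, transpose_zero, hX, neg_neg, add_zero, zero_add, neg_sub] <;>
  abel

lemma triangular_mul (n : ℕ) (X : Matrix (Fin n) (Fin n) ℝ) :
    (fromBlocks 1 X 0 1 : Matrix (Fin n ⊕ Fin n) (Fin n ⊕ Fin n) ℝ) * fromBlocks 1 (-X) 0 1
      = 1 := by
  rw [fromBlocks_multiply, ← fromBlocks_one]
  refine fromBlocks_inj.mpr ⟨?_, ?_, ?_, ?_⟩ <;> simp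

lemma Jsiegel_posQF (n : ℕ) {X Y : Matrix (Fin n) (Fin n) ℝ} (hX : Xᵀ = X)
    (hY : Y.PosDef) (u : Fin n ⊕ Fin n → ℝ) (hu : u ≠ 0) :
    0 < omega0 n u ((Jsiegel n X Y) *ᵥ u) := by
  rw [omega0_mulVec, ← S_factor n hX, ← Matrix.mulVec_mulVec, ← mulVec_dot,
    ← Matrix.mulVec_mulVec]
  set w : Fin n ⊕ Fin n → ℝ := (fromBlocks 1 (-X) 0 1 : Matrix _ _ ℝ) *ᵥ u with hw
  have hwne : w ≠ 0 := by
    intro h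
    apply hu
    have : (fromBlocks 1 X 0 1 : Matrix (Fin n ⊕ Fin n) (Fin n ⊕ Fin n) ℝ) *ᵥ w = u := by
      rw [hw, Matrix.mulVec_mulVec, triangular_mul, Matrix.one_mulVec]
    rw [h, Matrix.mulVec_zero] at this
    exact this.symm
  have hsplit : w = Sum.elim (w ∘ Sum.inl) (w ∘ Sum.inr) := (Sum.elim_comp_inl_inr w).symm
  rw [hsplit, fromBlocks_mulVec, sumElim_dotProduct_sumElim]
  simp only [Matrix.zero_mulVec, add_zero, zero_add]
  have hcases : (w ∘ Sum.inl) ≠ 0 ∨ (w ∘ Sum.inr) ≠ 0 := by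
    by_contra h
    push_neg at h
    apply hwne
    rw [hsplit, h.1, h.2]
    ext (i | i) <;> simp
  have hYi : (Y⁻¹).PosDef := hY.inv
  rcases hcases with h | h
  · refine add_pos_of_pos_of_nonneg ?_ ?_
    · simpa using hYi.dotProduct_mulVec_pos h
    · simpa using hY.posSemidef.dotProduct_mulVec_nonneg (w ∘ Sum.inr)
  · refine add_pos_of_nonneg_of_pos ?_ ?_
    · simpa using hYi.posSemidef.dotProduct_mulVec_nonneg (w ∘ Sum.inl)
    · simpa using hY.dotProduct_mulVec_pos h

lemma neg_one_blocks (n : ℕ) : (-1 : Matrix (Fin n ⊕ Fin n) (Fin n ⊕ Fin n) ℝ)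
    = fromBlocks (-1) 0 0 (-1) := by
  rw [← fromBlocks_one, fromBlocks_neg]; simp


/-- The map `Z = X + iY ↦ J(Z)` is a bijection from the Siegel
upper half space onto the set of `ω₀`-compatible linear complex structures. -/
theorem siegel_bijOn_compatible (n : ℕ) (hn : 1 ≤ n) :
    Set.BijOn (fun p : Matrix (Fin n) (Fin n) ℝ × Matrix (Fin n) (Fin n) ℝ =>
      Jsiegel n p.1 p.2) (siegelSpace n) (compatibleJ n) := by
  refine ⟨?_, ?_, ?_⟩
  · -- MapsTo
    rintro ⟨X, Y⟩ ⟨hX, hY2, hY⟩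
    have hdet : IsUnit Y.det := isUnit_iff_ne_zero.mpr hY.det_pos.ne'
    refine ⟨Jsiegel_sq n hdet, ?_, fun u hu => Jsiegel_posQF n hX hY u hu⟩
    intro u v
    rw [omega0_mulVec_mulVec, omega0_eq]
    have hkey : (J0 n * Jsiegel n X Y)ᵀ * Jsiegel n X Y = -(J0 n) := by
      rw [J0_mul_Jsiegel_symm n hX hY2, Matrix.mul_assoc, Jsiegel_sq n hdet,
        Matrix.mul_neg, Matrix.mul_one]
    rw [hkey]
  · -- InjOn
    rintro ⟨X1, Y1⟩ ⟨hX1, hY1s, hY1⟩ ⟨X2, Y2⟩ ⟨hX2, hY2s, hY2⟩ h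
    simp only [Jsiegel] at h
    have h21 := congrArg Matrix.toBlocks₂₁ h
    have h11 := congrArg Matrix.toBlocks₁₁ h
    simp only [toBlocks_fromBlocks₂₁, toBlocks_fromBlocks₁₁] at h21 h11
    have hd1 : IsUnit Y1.det := isUnit_iff_ne_zero.mpr hY1.det_pos.ne'
    have hd2 : IsUnit Y2.det := isUnit_iff_ne_zero.mpr hY2.det_pos.ne'
    have hY : Y1 = Y2 := by
      rw [← nonsing_inv_nonsing_inv Y1 hd1, ← nonsing_inv_nonsing_inv Y2 hd2, h21]
    have hXX : X1 = X2 := by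
      calc X1 = X1 * Y1⁻¹ * Y1 := by
              rw [Matrix.mul_assoc, nonsing_inv_mul _ hd1, Matrix.mul_one]
        _ = X2 * Y2⁻¹ * Y1 := by rw [h11]
        _ = X2 := by rw [hY, Matrix.mul_assoc, nonsing_inv_mul _ hd2, Matrix.mul_one]
    simp [hXX, hY]
  · -- SurjOn
    rintro J ⟨hJ2, hinv, hpos⟩
    obtain ⟨A, B, C, D, hJb⟩ :
        ∃ A B C D, J = fromBlocks A B C D :=
      ⟨J.toBlocks₁₁, J.toBlocks₁₂, J.toBlocks₂₁, J.toBlocks₂₂, (fromBlocks_toBlocks J).symm⟩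
    have hmat : (J0 n * J)ᵀ * J = -(J0 n) := by
      refine mat_ext_of_dot fun u v => ?_
      rw [← omega0_mulVec_mulVec, show ((-(J0 n)) *ᵥ v) = (-(J0 n)) *ᵥ v from rfl,
        ← omega0_eq]
      exact hinv u v
    have hsym : (J0 n * J)ᵀ = J0 n * J := by
      have h1 : (J0 n * J)ᵀ * (J * J) = -(J0 n) * J := by
        rw [← Matrix.mul_assoc, hmat]
      rw [hJ2, Matrix.mul_neg, Matrix.mul_one, Matrix.neg_mul] at h1
      exact neg_injective h1
    have hJ0J : J0 n * J = fromBlocks (-C) (-D) A B := by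
      rw [hJb, J0, fromBlocks_multiply]
      refine fromBlocks_inj.mpr ⟨?_, ?_, ?_, ?_⟩ <;> simp
    rw [hJ0J, fromBlocks_transpose] at hsym
    obtain ⟨hC, hAD, hDA, hB⟩ := fromBlocks_inj.mp hsym
    have hCt : Cᵀ = C := by rwa [transpose_neg, neg_inj] at hC
    have hJ2b : fromBlocks (A*A + B*C) (A*B + B*D) (C*A + D*C) (C*B + D*D)
        = fromBlocks (-1) 0 0 (-1) := by
      rw [← fromBlocks_multiply, ← hJb, hJ2, neg_one_blocks]
    obtain ⟨h11, h12, h21, h22⟩ := fromBlocks_inj.mp hJ2b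
    -- C is positive definite
    have hCpos : C.PosDef := by
      refine Matrix.PosDef.of_dotProduct_mulVec_pos ?_ ?_
      · rw [Matrix.IsHermitian, conjTranspose_eq_transpose_of_trivial, hCt]
      · intro a ha
        have hu : (Sum.elim a 0 : Fin n ⊕ Fin n → ℝ) ≠ 0 := by
          intro h
          apply ha
          ext i
          exact congrFun h (Sum.inl i)
        have hp := hpos (Sum.elim a 0) hu
        rw [omega0_mulVec, hJ0J, fromBlocks_neg, neg_neg, neg_neg, fromBlocks_mulVec,
          sumElim_dotProduct_sumElim] at hp
        simp only [Matrix.mulVec_zero, add_zero, zero_dotProduct] at hp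
        simpa using hp
    have hdC : IsUnit C.det := isUnit_iff_ne_zero.mpr hCpos.det_pos.ne'
    have hCC : C⁻¹ * C = 1 := nonsing_inv_mul C hdC
    have hCC' : C * C⁻¹ = 1 := mul_nonsing_inv C hdC
    have hD : D = -(C * A * C⁻¹) := by
      have hDC : D * C = -(C * A) := eq_neg_of_add_eq_zero_left (by rwa [add_comm] at h21)
      have := congrArg (· * C⁻¹) hDC
      simp only [Matrix.mul_assoc, hCC', Matrix.mul_one, Matrix.neg_mul] at this
      rw [this, Matrix.mul_assoc]
    refine ⟨(A * C⁻¹, C⁻¹), ⟨?_, ?_, hCpos.inv⟩, ?_⟩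
    · -- X symmetric
      show (A * C⁻¹)ᵀ = A * C⁻¹
      rw [transpose_mul, transpose_nonsing_inv, hCt, hAD, hD, neg_neg,
        ← Matrix.mul_assoc, ← Matrix.mul_assoc, hCC, Matrix.one_mul]
    · show (C⁻¹)ᵀ = C⁻¹
      rw [transpose_nonsing_inv, hCt]
    · -- image is J
      show Jsiegel n (A * C⁻¹) C⁻¹ = J
      have hinvinv : (C⁻¹)⁻¹ = C := nonsing_inv_nonsing_inv C hdC
      rw [hJb, Jsiegel, hinvinv]
      have hBC : B * C = -1 - A * A := by
        rw [← h11]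
        abel
      have hB' : B = (-1 - A * A) * C⁻¹ := by
        have := congrArg (· * C⁻¹) hBC
        simp only [Matrix.mul_assoc, hCC', Matrix.mul_one] at this
        exact this
      refine fromBlocks_inj.mpr ⟨?_, ?_, rfl, ?_⟩
      · rw [Matrix.mul_assoc, hCC, Matrix.mul_one]
      · rw [hB', Matrix.sub_mul, Matrix.neg_mul, Matrix.one_mul]
        rw [show A * C⁻¹ * C * (A * C⁻¹) = A * A * C⁻¹ by
          rw [Matrix.mul_assoc A C⁻¹ C, hCC, Matrix.mul_one, ← Matrix.mul_assoc]]
      · rw [hD, Matrix.mul_assoc]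
end
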